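/- arXiv:math/0210101 — 3 statements merged into one kernel-verified Lean document; each statement's English description precedes it below -/
import Mathlib

section
/- Let I_Y ⊆ k[x_1,...,x_m,z_0,...,z_n] be a monomial ideal in x_1,...,x_m alone with radical (x_1,...,x_m) and Young diagram D. Then the Hilbert function of S/I_Y in degree d equals Σ_{B ∈ D} binom(n + d − w_B, n), where w_B is the weight of the box B and binom(n + e, n) is interpreted as 0 when e < 0; in particular the Hilbert polynomial of Y equals Σ_{B ∈ D} χ(O_{P^n}(d − w_B)). -/
open MvPolynomial

/-- The Hilbert function of the graded ring `S/I` in degree `d`: the `k`-dimension of the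
image of the space of degree-`d` homogeneous polynomials in `S/I`. -/
noncomputable def hilbertFunction {k : Type*} [Field k] {σ : Type*}
    (I : Ideal (MvPolynomial σ k)) (d : ℕ) : ℕ :=
  Module.finrank k
    ((MvPolynomial.homogeneousSubmodule σ k d).map (Ideal.Quotient.mkₐ k I).toLinearMap)

lemma Finsupp.degree_eq_sum' {σ : Type*} (f : σ →₀ ℕ) :
    f.degree = f.sum fun _ e => e := rfl

/-- Equiv between degree-`e` exponent vectors and multisets of size `e`. -/
noncomputable def degreeEquivSym (τ : Type*) [DecidableEq τ] (e : ℕ) :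
    {C : τ →₀ ℕ // C.degree = e} ≃ Sym τ e where
  toFun C := ⟨Finsupp.toMultiset C.1, by
    rw [Finsupp.card_toMultiset]; exact C.2⟩
  invFun s := ⟨Multiset.toFinsupp s.1, by
    have h : (Multiset.toFinsupp (s.1 : Multiset τ)).sum (fun _ => id) = Multiset.card s.1 :=
      Multiset.toFinsupp_sum_eq _
    rw [Finsupp.degree_eq_sum']
    exact h.trans s.2⟩
  left_inv C := by ext : 1; simp
  right_inv s := by ext : 1; simp [Sym.coe_mk]

lemma finite_degree_subtype (τ : Type*) [Fintype τ] [DecidableEq τ] (e : ℕ) :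
    Finite {C : τ →₀ ℕ // C.degree = e} :=
  Finite.of_equiv _ (degreeEquivSym τ e).symm

lemma nat_card_degree_eq (τ : Type*) [Fintype τ] [DecidableEq τ] (e : ℕ) :
    Nat.card {C : τ →₀ ℕ // C.degree = e} = (Fintype.card τ + e - 1).choose e := by
  rw [Nat.card_congr (degreeEquivSym τ e), Nat.card_eq_fintype_card,
    Sym.card_sym_eq_choose]
theorem hilbertFunction_eq_card {k : Type*} [Field k] {σ : Type*}
    (I : Ideal (MvPolynomial σ k))
    (hmem : ∀ p : MvPolynomial σ k, p ∈ I ↔ ∀ μ ∈ p.support, (monomial μ (1:k)) ∈ I)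
    (d : ℕ) (T : Finset (σ →₀ ℕ))
    (hT : ∀ μ, μ ∈ T ↔ (μ.degree = d ∧ (monomial μ (1:k)) ∉ I)) :
    hilbertFunction I d = T.card := by
  classical
  set L := (Ideal.Quotient.mkₐ k I).toLinearMap with hLdef
  have hL : ∀ q : MvPolynomial σ k, L q = Ideal.Quotient.mk I q := fun q => rfl
  set f : ↥T → MvPolynomial σ k ⧸ I :=
    fun μ => L (monomial μ.1 1) with hf
  have hLI : LinearIndependent k f := by
    rw [Fintype.linearIndependent_iff]
    intro g hg μ0
    by_contra hne
    set p : MvPolynomial σ k := ∑ μ : ↥T, monomial μ.1 (g μ) with hp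
    have hpI : p ∈ I := by
      rw [← Ideal.Quotient.eq_zero_iff_mem, ← hL, hp, map_sum, ← hg]
      refine Finset.sum_congr rfl fun μ _ => ?_
      rw [hf]
      rw [← map_smul, MvPolynomial.smul_monomial, smul_eq_mul, mul_one]
    have hcoeff : coeff μ0.1 p = g μ0 := by
      rw [hp, MvPolynomial.coeff_sum]
      rw [Finset.sum_eq_single_of_mem μ0 (Finset.mem_univ _)]
      · rw [coeff_monomial, if_pos rfl]
      · intro b _ hb
        rw [coeff_monomial, if_neg (fun h => hb (Subtype.ext h))]
    have hsup : μ0.1 ∈ p.support := mem_support_iff.mpr (by rw [hcoeff]; exact hne)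
    exact ((hT μ0.1).mp μ0.2).2 ((hmem p).mp hpI μ0.1 hsup)
  have hspan : Submodule.span k (Set.range f) =
      (homogeneousSubmodule σ k d).map (Ideal.Quotient.mkₐ k I).toLinearMap := by
    apply le_antisymm
    · rw [Submodule.span_le]
      rintro _ ⟨μ, rfl⟩
      exact ⟨monomial μ.1 1,
        (mem_homogeneousSubmodule _ _).2
          (isHomogeneous_monomial _ ((hT μ.1).mp μ.2).1), rfl⟩
    · rintro _ ⟨p, hp, rfl⟩
      rw [SetLike.mem_coe, mem_homogeneousSubmodule] at hp
      have h1 : L p =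
          ∑ μ ∈ p.support, L (monomial μ (coeff μ p)) := by
        conv_lhs => rw [p.as_sum]
        exact map_sum _ _ _
      rw [h1]
      apply Submodule.sum_mem
      intro μ hμ
      have hdeg : μ.degree = d := by
        have := hp (mem_support_iff.mp hμ)
        rw [Finsupp.degree_eq_weight_one]; exact this
      have h2 : L (monomial μ (coeff μ p)) =
          coeff μ p • L (monomial μ (1:k)) := by
        rw [← map_smul, MvPolynomial.smul_monomial, smul_eq_mul, mul_one]
      rw [h2]
      by_cases hI' : monomial μ (1:k) ∈ I
      · rw [hL, Ideal.Quotient.eq_zero_iff_mem.2 hI', smul_zero]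
        exact Submodule.zero_mem _
      · exact Submodule.smul_mem _ _
          (Submodule.subset_span ⟨⟨μ, (hT μ).mpr ⟨hdeg, hI'⟩⟩, rfl⟩)
  unfold hilbertFunction
  rw [← hspan, finrank_span_eq_card hLI, Fintype.card_coe]


/-- for a monomial ideal `I_Y` in the variables `x_1,…,x_m` alone with
radical `(x_1,…,x_m)` and (finite) Young diagram `D`, the Hilbert function of `S/I_Y`,
`S = k[x_1,…,x_m,z_0,…,z_n]`, in degree `d` is `Σ_{B ∈ D} binom(n + d − w_B, n)`,
with `binom(n + e, n) := 0` for `e < 0`; in particular the Hilbert polynomial of `Y` is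
`Σ_{B ∈ D} χ(O_{P^n}(d − w_B))`. -/
theorem hilbert_function_eq_sum_over_diagram
    (k : Type*) [Field k] (m n : ℕ)
    (I : Ideal (MvPolynomial (Fin m ⊕ Fin (n + 1)) k))
    (hmono : ∃ G : Set (Fin m →₀ ℕ), I = Ideal.span
      ((fun p : Fin m →₀ ℕ => monomial (Finsupp.mapDomain Sum.inl p) (1 : k)) '' G))
    (hrad : I.radical = Ideal.span
      (Set.range fun i : Fin m =>
        (X (Sum.inl i) : MvPolynomial (Fin m ⊕ Fin (n + 1)) k)))
    (hD : ({B : Fin m →₀ ℕ |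
      monomial (Finsupp.mapDomain Sum.inl B) (1 : k) ∉ I}).Finite) (d : ℕ) :
    hilbertFunction I d =
      ∑ B ∈ hD.toFinset,
        (if (∑ i, B i) ≤ n + d then Nat.choose (n + d - ∑ i, B i) n else 0) := by
  classical
  obtain ⟨G, hG⟩ := hmono
  have hmono' : ∀ x : MvPolynomial (Fin m ⊕ Fin (n+1)) k,
      x ∈ I ↔ ∀ μ ∈ x.support, ∃ g ∈ G, Finsupp.mapDomain Sum.inl g ≤ μ := by
    intro x
    rw [hG]
    have himg : (fun p : Fin m →₀ ℕ => monomial (Finsupp.mapDomain Sum.inl p) (1 : k)) '' G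
        = (fun s : Fin m ⊕ Fin (n+1) →₀ ℕ => monomial s (1:k)) ''
          ((Finsupp.mapDomain (Sum.inl : Fin m → Fin m ⊕ Fin (n+1))) '' G) := by
      rw [Set.image_image]
    rw [himg, mem_ideal_span_monomial_image]
    refine forall₂_congr fun μ _ => ?_
    constructor
    · rintro ⟨si, ⟨g, hg, rfl⟩, hle⟩; exact ⟨g, hg, hle⟩
    · rintro ⟨g, hg, hle⟩; exact ⟨_, ⟨g, hg, rfl⟩, hle⟩
  have hmemmono : ∀ μ : (Fin m ⊕ Fin (n+1)) →₀ ℕ,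
      (monomial μ (1:k) ∈ I) ↔ ∃ g ∈ G, Finsupp.mapDomain Sum.inl g ≤ μ := by
    intro μ
    rw [hmono' _]
    constructor
    · intro h
      refine h μ ?_
      rw [support_monomial, if_neg one_ne_zero]
      exact Finset.mem_singleton_self μ
    · intro h ν hν
      rw [support_monomial, if_neg one_ne_zero, Finset.mem_singleton] at hν
      subst hν; exact h
  have hmem : ∀ p, p ∈ I ↔ ∀ μ ∈ p.support, monomial μ (1:k) ∈ I :=
    fun p => (hmono' p).trans (forall₂_congr fun μ _ => (hmemmono μ).symm)
  have hinl : ∀ (B : Fin m →₀ ℕ) (a : Fin m),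
      Finsupp.mapDomain (Sum.inl : Fin m → Fin m ⊕ Fin (n+1)) B (Sum.inl a) = B a :=
    fun B a => Finsupp.mapDomain_apply Sum.inl_injective B a
  have hinl' : ∀ (B : Fin m →₀ ℕ) (b : Fin (n+1)),
      Finsupp.mapDomain (Sum.inl : Fin m → Fin m ⊕ Fin (n+1)) B (Sum.inr b) = 0 :=
    fun B b => Finsupp.mapDomain_notin_range _ _ (by simp)
  have hinr : ∀ (C : Fin (n+1) →₀ ℕ) (b : Fin (n+1)),
      Finsupp.mapDomain (Sum.inr : Fin (n+1) → Fin m ⊕ Fin (n+1)) C (Sum.inr b) = C b :=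
    fun C b => Finsupp.mapDomain_apply Sum.inr_injective C b
  have hinr' : ∀ (C : Fin (n+1) →₀ ℕ) (a : Fin m),
      Finsupp.mapDomain (Sum.inr : Fin (n+1) → Fin m ⊕ Fin (n+1)) C (Sum.inl a) = 0 :=
    fun C a => Finsupp.mapDomain_notin_range _ _ (by simp)
  have hle : ∀ (g B : Fin m →₀ ℕ) (C : Fin (n+1) →₀ ℕ),
      Finsupp.mapDomain Sum.inl g ≤ Finsupp.mapDomain Sum.inl B + Finsupp.mapDomain Sum.inr C
        ↔ g ≤ B := by
    intro g B C
    rw [Finsupp.le_def, Finsupp.le_def]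
    constructor
    · intro h a
      have := h (Sum.inl a)
      simpa only [Finsupp.add_apply, hinl, hinr', add_zero] using this
    · intro h s
      cases s with
      | inl a =>
        simp only [Finsupp.add_apply, hinl, hinr', add_zero]
        exact h a
      | inr b =>
        simp only [hinl']
        exact Nat.zero_le _
  have hmemB : ∀ B : Fin m →₀ ℕ,
      (monomial (Finsupp.mapDomain Sum.inl B) (1:k) ∈ I) ↔ ∃ g ∈ G, g ≤ B := by
    intro B
    rw [hmemmono]
    refine exists_congr fun g => and_congr_right fun _ => ?_
    have h0 := hle g B 0
    rw [Finsupp.mapDomain_zero, add_zero] at h0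
    exact h0
  have hmemBC : ∀ (B : Fin m →₀ ℕ) (C : Fin (n+1) →₀ ℕ),
      (monomial (Finsupp.mapDomain Sum.inl B + Finsupp.mapDomain Sum.inr C) (1:k) ∈ I)
        ↔ (monomial (Finsupp.mapDomain Sum.inl B) (1:k) ∈ I) := by
    intro B C
    rw [hmemmono, hmemB]
    exact exists_congr fun g => and_congr_right fun _ => hle g B C
  have hdegBC : ∀ (B : Fin m →₀ ℕ) (C : Fin (n+1) →₀ ℕ),
      (Finsupp.mapDomain Sum.inl B + Finsupp.mapDomain Sum.inr C).degree
        = B.degree + C.degree := by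
    intro B C
    rw [Finsupp.degree_eq_sum', Finsupp.degree_eq_sum', Finsupp.degree_eq_sum',
      Finsupp.sum_add_index' (fun _ => rfl) (fun _ _ _ => rfl),
      Finsupp.sum_mapDomain_index (fun _ => rfl) (fun _ _ _ => rfl),
      Finsupp.sum_mapDomain_index (fun _ => rfl) (fun _ _ _ => rfl)]
  have hw : ∀ B : Fin m →₀ ℕ, (∑ i, B i) = B.degree := by
    intro B
    rw [Finsupp.degree_eq_sum', Finsupp.sum_fintype _ _ (fun _ => rfl)]
  set pr := (Finsupp.sumFinsuppEquivProdFinsupp :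
    ((Fin m ⊕ Fin (n+1)) →₀ ℕ) ≃ (Fin m →₀ ℕ) × (Fin (n+1) →₀ ℕ)) with hpr
  have hprfst : ∀ (μ : (Fin m ⊕ Fin (n+1)) →₀ ℕ) (a : Fin m), (pr μ).1 a = μ (Sum.inl a) :=
    fun μ a => Finsupp.fst_sumFinsuppEquivProdFinsupp μ a
  have hprsnd : ∀ (μ : (Fin m ⊕ Fin (n+1)) →₀ ℕ) (b : Fin (n+1)), (pr μ).2 b = μ (Sum.inr b) :=
    fun μ b => Finsupp.snd_sumFinsuppEquivProdFinsupp μ b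
  have hrecon : ∀ μ : (Fin m ⊕ Fin (n+1)) →₀ ℕ,
      Finsupp.mapDomain Sum.inl (pr μ).1 + Finsupp.mapDomain Sum.inr (pr μ).2 = μ := by
    intro μ
    ext s
    cases s with
    | inl a => rw [Finsupp.add_apply, hinl, hinr', add_zero, hprfst]
    | inr b => rw [Finsupp.add_apply, hinl', hinr, zero_add, hprsnd]
  have hTfin : {μ : (Fin m ⊕ Fin (n+1)) →₀ ℕ |
      μ.degree = d ∧ monomial μ (1:k) ∉ I}.Finite := by
    have h1 : Finite {C : (Fin m ⊕ Fin (n+1)) →₀ ℕ // C.degree = d} :=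
      finite_degree_subtype _ d
    have h2 : {μ : (Fin m ⊕ Fin (n+1)) →₀ ℕ | μ.degree = d}.Finite :=
      Set.finite_coe_iff.mp h1
    exact h2.subset fun μ hμ => hμ.1
  rw [hilbertFunction_eq_card I hmem d hTfin.toFinset (fun μ => hTfin.mem_toFinset)]
  have hproj : ∀ μ ∈ hTfin.toFinset, (pr μ).1 ∈ hD.toFinset := by
    intro μ hμ
    rw [Set.Finite.mem_toFinset] at hμ
    rw [Set.Finite.mem_toFinset]
    intro hBI
    apply hμ.2
    rw [← hrecon μ]
    exact (hmemBC _ _).mpr hBI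
  rw [Finset.card_eq_sum_card_fiberwise hproj]
  refine Finset.sum_congr rfl fun B hB => ?_
  rw [Set.Finite.mem_toFinset] at hB
  rw [hw B]
  by_cases hcase : B.degree ≤ d
  · have hif : B.degree ≤ n + d := le_trans hcase (Nat.le_add_left d n)
    rw [if_pos hif]
    have hcardfib : ((hTfin.toFinset.filter fun μ => (pr μ).1 = B)).card
        = Nat.card {C : Fin (n+1) →₀ ℕ // C.degree = d - B.degree} := by
      rw [← Nat.card_eq_finsetCard]
      refine Nat.card_congr ?_
      refine
        { toFun := fun μ => ⟨(pr μ.1).2, ?_⟩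
          invFun := fun C =>
            ⟨Finsupp.mapDomain Sum.inl B + Finsupp.mapDomain Sum.inr C.1, ?_⟩
          left_inv := ?_
          right_inv := ?_ }
      · obtain ⟨hμT, hμB⟩ := Finset.mem_filter.mp μ.2
        rw [Set.Finite.mem_toFinset] at hμT
        have hd' : μ.1.degree = d := hμT.1
        rw [← hrecon μ.1, hdegBC, hμB] at hd'
        omega
      · rw [Finset.mem_filter]
        constructor
        · rw [Set.Finite.mem_toFinset]
          constructor
          · rw [hdegBC, C.2]
            omega
          · intro hI'
            exact hB ((hmemBC _ _).mp hI')
        · ext a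
          rw [hprfst, Finsupp.add_apply, hinl, hinr', add_zero]
      · intro μ
        apply Subtype.ext
        have hμB := (Finset.mem_filter.mp μ.2).2
        show Finsupp.mapDomain Sum.inl B + Finsupp.mapDomain Sum.inr (pr μ.1).2 = μ.1
        have hr := hrecon μ.1
        rw [hμB] at hr
        exact hr
      · intro C
        apply Subtype.ext
        show (pr (Finsupp.mapDomain Sum.inl B + Finsupp.mapDomain Sum.inr C.1)).2 = C.1
        ext b
        rw [hprsnd, Finsupp.add_apply, hinl', hinr, zero_add]
    rw [hcardfib, nat_card_degree_eq]
    have h1 : Fintype.card (Fin (n+1)) + (d - B.degree) - 1 = n + (d - B.degree) := by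
      rw [Fintype.card_fin]; omega
    have h2 : n + d - B.degree = n + (d - B.degree) := by omega
    rw [h1, h2]
    have h3 := Nat.choose_symm (Nat.le_add_left (d - B.degree) n)
    rw [Nat.add_sub_cancel] at h3
    exact h3.symm
  · have hempty : (hTfin.toFinset.filter fun μ => (pr μ).1 = B) = ∅ := by
      rw [Finset.filter_eq_empty_iff]
      intro μ hμ
      rw [Set.Finite.mem_toFinset] at hμ
      intro hμB
      have hd' : μ.degree = d := hμ.1
      rw [← hrecon μ, hdegBC, hμB] at hd'
      omega
    rw [hempty, Finset.card_empty]
    by_cases hif : B.degree ≤ n + d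
    · rw [if_pos hif, Nat.choose_eq_zero_of_lt (by omega)]
    · rw [if_neg hif]
end

section
/- Let (a_1 ≥ a_2 ≥ ... ≥ a_s) and (b_1 ≥ ... ≥ b_{s−1}) be sequences of non-negative integers. There exists a two-dimensional Young diagram whose inner corners have weights a_1,...,a_s and whose outer corners have weights b_1,...,b_{s−1} if and only if: (i) there is exactly one more a than b's; (ii) b_i > a_i for all i ≤ s−1 and b_i > a_{i+1} for all i (i.e. b_i > a_i ≥ a_{i+1}); (iii) Σ a_i = Σ b_j. -/
/-- A two-dimensional Young diagram: a finite subset of ℕ² closed under coordinatewise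
decrease. -/
def IsYoung2 (T : Set (ℕ × ℕ)) : Prop :=
  T.Finite ∧ ∀ p ∈ T, ∀ q : ℕ × ℕ, q.1 ≤ p.1 → q.2 ≤ p.2 → q ∈ T

/-- Inner corners of a two-dimensional Young diagram. -/
def innerCorners (T : Set (ℕ × ℕ)) : Set (ℕ × ℕ) :=
  {p | p ∉ T ∧ (p.1 = 0 ∨ (p.1 - 1, p.2) ∈ T) ∧ (p.2 = 0 ∨ (p.1, p.2 - 1) ∈ T)}

/-- Outer corners of a two-dimensional Young diagram. -/
def outerCorners (T : Set (ℕ × ℕ)) : Set (ℕ × ℕ) :=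
  {p | 1 ≤ p.1 ∧ 1 ≤ p.2 ∧ (p.1 - 1, p.2) ∉ T ∧ (p.1, p.2 - 1) ∉ T ∧
    (p.1 - 1, p.2 - 1) ∈ T}



open Finset

/-- count for an antitone sequence: lower bound on value from count. -/
lemma YD_anti_count_lt {n : ℕ} (b : ℕ → ℕ) (hb : ∀ i j, i ≤ j → j < n → b j ≤ b i)
    {t i : ℕ} (hi : i < n)
    (hc : i + 1 ≤ ((range n).filter (fun j => t + 1 ≤ b j)).card) : t < b i := by
  by_contra hlt
  push_neg at hlt
  have hsub : (range n).filter (fun j => t + 1 ≤ b j) ⊆ range i := by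
    intro j hj
    simp only [mem_filter, mem_range] at hj ⊢
    by_contra hji
    push_neg at hji
    have := hb i j hji hj.1
    omega
  have := card_le_card hsub
  simp only [card_range] at this
  omega

/-- count for an antitone sequence: count from value. -/
lemma YD_anti_count_ge {n : ℕ} (b : ℕ → ℕ) (hb : ∀ i j, i ≤ j → j < n → b j ≤ b i)
    {t i : ℕ} (hi : i < n) (hv : t ≤ b i) :
    i + 1 ≤ ((range n).filter (fun j => t ≤ b j)).card := by
  have hsub : range (i+1) ⊆ (range n).filter (fun j => t ≤ b j) := by
    intro j hj
    simp only [mem_range] at hj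
    simp only [mem_filter, mem_range]
    have := hb j i (by omega) hi
    constructor
    · omega
    · omega
  have := card_le_card hsub
  simpa [card_range] using this

/-- CORE1: one-sided injection. -/
lemma YD_core1 {m : ℕ} (c d : ℕ → ℕ) (hd1 : ∀ k, k + 1 < m → c k < d k) (t : ℕ) :
    ((range m).filter (fun j => t ≤ c j)).card ≤
      ((range (m-1)).filter (fun j => t + 1 ≤ d j)).card + 1 := by
  have hsub : (range m).filter (fun j => t ≤ c j) ⊆
      insert (m-1) ((range (m-1)).filter (fun j => t + 1 ≤ d j)) := by
    intro j hj
    simp only [mem_filter, mem_range] at hj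
    rcases Nat.lt_or_ge j (m-1) with hlt | hge
    · apply mem_insert_of_mem
      simp only [mem_filter, mem_range]
      exact ⟨hlt, by have := hd1 j (by omega); omega⟩
    · simp only [mem_insert]
      left; omega
  calc ((range m).filter (fun j => t ≤ c j)).card
      ≤ _ := card_le_card hsub
    _ ≤ _ := by
        rw [Nat.add_comm]
        exact card_insert_le _ _

/-- CORE2: if there is a gap, full injection. -/
lemma YD_core2 {m : ℕ} (c d : ℕ → ℕ) (hd1 : ∀ k, k + 1 < m → c k < d k)
    (hd2 : ∀ k, k + 1 < m → c (k+1) < d k) (t : ℕ)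
    {g : ℕ} (hg : g < m) (hgt : c g < t) :
    ((range m).filter (fun j => t ≤ c j)).card ≤
      ((range (m-1)).filter (fun j => t + 1 ≤ d j)).card := by
  apply card_le_card_of_injOn (fun j => if j < g then j else j - 1)
  · intro j hj
    simp only [mem_coe, mem_filter, mem_range] at hj
    have hjg : j ≠ g := by rintro rfl; omega
    simp only [mem_coe, mem_filter, mem_range]
    split_ifs with h
    · exact ⟨by omega, by have := hd1 j (by omega); omega⟩
    · have hjg2 : g < j := by omega
      refine ⟨by omega, ?_⟩
      have := hd2 (j-1) (by omega)
      have hj1 : j - 1 + 1 = j := by omega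
      rw [hj1] at this
      omega
  · intro x hx y hy hxy
    simp only [coe_filter, Set.mem_setOf_eq, mem_range] at hx hy
    have hxg : x ≠ g := by rintro rfl; omega
    have hyg : y ≠ g := by rintro rfl; omega
    simp only at hxy
    split_ifs at hxy <;> omega



lemma YD_count_perm {n : ℕ} (w : Fin n → ℕ) (C : ℕ → ℕ) (σ : Fin n ≃ Fin n)
    (hw : ∀ i, w i = C (σ i).1) (t : ℕ) :
    ((univ : Finset (Fin n)).filter (fun i => t ≤ w i)).card
      = ((range n).filter (fun k => t ≤ C k)).card := by
  apply card_bij (fun i _ => (σ i).1)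
  · intro i hi
    simp only [mem_filter, mem_univ, true_and] at hi
    simp only [mem_filter, mem_range]
    exact ⟨(σ i).2, by rw [← hw]; exact hi⟩
  · intro i _ j _ hij
    exact σ.injective (Fin.ext hij)
  · intro k hk
    simp only [mem_filter, mem_range] at hk
    refine ⟨σ.symm ⟨k, hk.1⟩, ?_, ?_⟩
    · simp only [mem_filter, mem_univ, true_and]
      rw [hw, σ.apply_symm_apply]
      exact hk.2
    · rw [σ.apply_symm_apply]
  
lemma YD_count_lift {n : ℕ} (w : Fin n → ℕ) (A : ℕ → ℕ)
    (hA : ∀ i : Fin n, A i.1 = w i) (t : ℕ) :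
    ((range n).filter (fun k => t ≤ A k)).card
      = ((univ : Finset (Fin n)).filter (fun i => t ≤ w i)).card := by
  apply card_bij (fun k hk => (⟨k, by
    simp only [mem_filter, mem_range] at hk; exact hk.1⟩ : Fin n))
  · intro k hk
    have hk' := hk
    simp only [mem_filter, mem_range] at hk'
    simp only [mem_filter, mem_univ, true_and]
    rw [← hA ⟨k, hk'.1⟩]
    exact hk'.2
  · intro i hi j hj hij
    simpa using congrArg Fin.val hij
  · intro i hi
    simp only [mem_filter, mem_univ, true_and] at hi
    refine ⟨i.1, ?_, rfl⟩
    simp only [mem_filter, mem_range]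
    exact ⟨i.2, by rw [hA]; exact hi⟩

lemma YD_sum_perm {n : ℕ} (w : Fin n → ℕ) (C : ℕ → ℕ) (σ : Fin n ≃ Fin n)
    (hw : ∀ i, w i = C (σ i).1) :
    ∑ i, w i = ∑ k ∈ range n, C k := by
  rw [show (∑ i, w i) = ∑ i, C (σ i).1 from Finset.sum_congr rfl (fun i _ => hw i)]
  rw [Equiv.sum_comp σ (fun j => C j.1)]
  exact Fin.sum_univ_eq_sum_range (fun k => C k) n

lemma YD_sum_lift {n : ℕ} (w : Fin n → ℕ) (A : ℕ → ℕ)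
    (hA : ∀ i : Fin n, A i.1 = w i) :
    ∑ k ∈ range n, A k = ∑ i, w i := by
  rw [← Fin.sum_univ_eq_sum_range (fun k => A k) n]
  exact Finset.sum_congr rfl (fun i _ => hA i)

lemma YD_construct (s : ℕ) (hs : 1 ≤ s) (α β : ℕ → ℕ)
    (h1 : ∀ i, i < s - 1 → α i < β i)
    (h2 : ∀ i, i < s - 1 → α (i+1) < β i)
    (hsum : ∑ i ∈ range s, α i = ∑ i ∈ range (s-1), β i) :
    ∃ T : Set (ℕ × ℕ), IsYoung2 T ∧
      (∃ f : Fin s → ℕ × ℕ, Function.Injective f ∧ Set.range f = innerCorners T ∧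
        ∀ i, (f i).1 + (f i).2 = α i.1) ∧
      (∃ g : Fin (s - 1) → ℕ × ℕ, Function.Injective g ∧ Set.range g = outerCorners T ∧
        ∀ i, (g i).1 + (g i).2 = β i.1) := by
  set SA : ℕ → ℕ := fun i => ∑ j ∈ range i, α j with hSA
  set SB : ℕ → ℕ := fun i => ∑ j ∈ range i, β j with hSB
  have hSAstep : ∀ i, SA (i+1) = SA i + α i := fun i => sum_range_succ α i
  have hSBstep : ∀ i, SB (i+1) = SB i + β i := fun i => sum_range_succ β i
  have hAB : ∀ i, i ≤ s - 1 → SA i ≤ SB i := by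
    intro i hi
    apply sum_le_sum
    intro j hj
    simp only [mem_range] at hj
    exact le_of_lt (h1 j (by omega))
  -- key inequality K
  have K : ∀ k, k ≤ s - 1 → SB (s-1-k) + k ≤ SA (s-1-k+1) := by
    intro k
    induction k with
    | zero =>
      intro _
      simp only [Nat.sub_zero, Nat.add_zero]
      rw [show s - 1 + 1 = s by omega]
      exact le_of_eq hsum.symm
    | succ k ih =>
      intro hk
      have ih' := ih (by omega)
      have e1 : s - 1 - k = (s - 1 - (k+1)) + 1 := by omega
      rw [e1] at ih'
      rw [hSAstep, hSBstep] at ih'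
      have := h2 (s - 1 - (k+1)) (by omega)
      omega
  have K' : ∀ i, i < s → SB i + (s - 1 - i) ≤ SA (i+1) := by
    intro i hi
    have := K (s-1-i) (by omega)
    have e : s - 1 - (s - 1 - i) = i := by omega
    rw [e] at this
    omega
  set X : ℕ → ℕ := fun i => SB i - SA i with hX
  set Y : ℕ → ℕ := fun i => SA (i+1) - SB i with hY
  have hX0 : X 0 = 0 := by simp [hX, hSA, hSB]
  have hXY : ∀ i, i < s → X i + Y i = α i := by
    intro i hi
    have h1' := hAB i (by omega)
    have h2' := K' i hi
    have h3' := hSAstep i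
    simp only [hX, hY]
    omega
  have hXstep : ∀ i, i < s - 1 → X i < X (i+1) := by
    intro i hi
    have ha1 := hAB i (by omega)
    have ha2 := hAB (i+1) (by omega)
    have := h1 i hi
    simp only [hX]
    rw [hSAstep, hSBstep]
    omega
  have hYstep : ∀ i, i < s - 1 → Y (i+1) < Y i := by
    intro i hi
    have k1 := K' i (by omega)
    have k2 := K' (i+1) (by omega)
    have := h2 i hi
    simp only [hY]
    rw [hSAstep (i+1), hSBstep i]
    omega
  have hYlast : Y (s-1) = 0 := by
    have k1 := K' (s-1) (by omega)
    have e : s - 1 + 1 = s := by omega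
    rw [e] at k1
    have : SA s = SB (s-1) := hsum
    simp only [hY, e]
    omega
  -- monotonicity in general form
  have hXmono : ∀ i j, i ≤ j → j ≤ s - 1 → X i ≤ X j := by
    intro i j hij hj
    induction j with
    | zero => simp_all
    | succ j ih =>
      rcases Nat.lt_or_ge i (j+1) with h | h
      · have := hXstep j (by omega)
        have := ih (by omega) (by omega)
        omega
      · rw [show i = j + 1 by omega]
  have hXsmono : ∀ i j, i < j → j ≤ s - 1 → X i < X j := by
    intro i j hij hj
    have h1' := hXstep i (by omega)
    have h2' := hXmono (i+1) j (by omega) hj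
    omega
  have hYanti : ∀ i j, i ≤ j → j ≤ s - 1 → Y j ≤ Y i := by
    intro i j hij hj
    induction j with
    | zero => simp_all
    | succ j ih =>
      rcases Nat.lt_or_ge i (j+1) with h | h
      · have := hYstep j (by omega)
        have := ih (by omega) (by omega)
        omega
      · rw [show i = j + 1 by omega]
  have hYsanti : ∀ i j, i < j → j ≤ s - 1 → Y j < Y i := by
    intro i j hij hj
    have h1' := hYstep i (by omega)
    have h2' := hYanti (i+1) j (by omega) hj
    omega
  -- the diagram
  set T : Set (ℕ × ℕ) := {p | ∀ i, i < s → p.1 < X i ∨ p.2 < Y i} with hT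
  have memT : ∀ p : ℕ × ℕ, p ∈ T ↔ ∀ i, i < s → p.1 < X i ∨ p.2 < Y i := fun p => Iff.rfl
  refine ⟨T, ⟨?_, ?_⟩, ?_, ?_⟩
  · -- finite
    apply Set.Finite.subset ((Set.finite_Iio (X (s-1))).prod (Set.finite_Iio (Y 0)))
    intro p hp
    rw [memT] at hp
    have e1 := hp (s-1) (by omega)
    have e2 := hp 0 (by omega)
    rw [hYlast] at e1
    rw [hX0] at e2
    constructor
    · simp only [Set.mem_Iio]; omega
    · simp only [Set.mem_Iio]; omega
  · -- downward closed
    intro p hp q hq1 hq2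
    rw [memT] at hp ⊢
    intro i hi
    rcases hp i hi with h | h
    · left; omega
    · right; omega
  · -- inner corners
    refine ⟨fun i => (X i.1, Y i.1), ?_, ?_, ?_⟩
    · intro i j hij
      simp only [Prod.mk.injEq] at hij
      rcases Nat.lt_trichotomy i.1 j.1 with h | h | h
      · have := hXsmono i.1 j.1 h (by omega)
        omega
      · exact Fin.ext h
      · have := hXsmono j.1 i.1 h (by omega)
        omega
    · ext p
      simp only [Set.mem_range, innerCorners, Set.mem_setOf_eq]
      constructor
      · rintro ⟨k, rfl⟩
        refine ⟨?_, ?_, ?_⟩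
        · rw [memT]
          push_neg
          exact ⟨k.1, k.2, le_refl _, le_refl _⟩
        · rcases Nat.eq_zero_or_pos k.1 with h | h
          · left; simp [h, hX0]
          · right
            rw [memT]
            intro i hi
            rcases Nat.lt_or_ge i k.1 with h' | h'
            · right; exact hYsanti i k.1 h' (by omega)
            · left
              have := hXmono k.1 i h' (by omega)
              have := hXsmono 0 k.1 h (by omega)
              rw [hX0] at this
              simp only
              omega
        · rcases Nat.eq_zero_or_pos (Y k.1) with h | h
          · left; exact h
          · right
            rw [memT]
            intro i hi
            rcases Nat.lt_or_ge k.1 i with h' | h'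
            · left; exact hXsmono k.1 i h' (by omega)
            · right
              have := hYanti i k.1 h' (by omega)
              simp only
              omega
      · rintro ⟨hpT, hp1, hp2⟩
        rw [memT] at hpT
        push_neg at hpT
        obtain ⟨i0, hi0, hXi0, hYi0⟩ := hpT
        -- k := largest index < s with X k ≤ p.1
        have hex : ∃ k, k < s ∧ X k ≤ p.1 ∧ ∀ j, j < s → X j ≤ p.1 → j ≤ k := by
          have hbdd : ∀ j ∈ (range s).filter (fun j => X j ≤ p.1), j ≤ s := by
            intro j hj
            simp only [mem_filter, mem_range] at hj
            omega
          obtain ⟨k, hk, hkmax⟩ := Finset.exists_max_image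
            ((range s).filter (fun j => X j ≤ p.1)) id
            ⟨i0, by simp only [mem_filter, mem_range]; exact ⟨hi0, hXi0⟩⟩
          simp only [mem_filter, mem_range] at hk
          exact ⟨k, hk.1, hk.2, fun j hj hXj => hkmax j (by
            simp only [mem_filter, mem_range]; exact ⟨hj, hXj⟩)⟩
        obtain ⟨k, hks, hXk, hkmax⟩ := hex
        have hYk : Y k ≤ p.2 := by
          rcases le_or_gt i0 k with h | h
          · exact le_trans (hYanti i0 k h (by omega)) hYi0
          · exact absurd (hkmax i0 hi0 hXi0) (by omega)
        have hp1' : p.1 = X k := by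
          by_contra hne
          have hgt : X k < p.1 := by omega
          have hp0 : p.1 ≠ 0 := by omega
          rcases hp1 with h | h
          · exact hp0 h
          · rw [memT] at h
            rcases h k hks with h' | h'
            · simp only at h'; omega
            · simp only at h'; omega
        have hp2' : p.2 = Y k := by
          by_contra hne
          have hgt : Y k < p.2 := by omega
          have hp0 : p.2 ≠ 0 := by omega
          rcases hp2 with h | h
          · exact hp0 h
          · rw [memT] at h
            rcases h k hks with h' | h'
            · simp only at h'; omega
            · simp only at h'; omega
        refine ⟨⟨k, hks⟩, ?_⟩
        rw [Prod.ext_iff]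
        exact ⟨hp1'.symm, hp2'.symm⟩
    · intro i
      exact hXY i.1 i.2
  · -- outer corners
    refine ⟨fun i => (X (i.1+1), Y i.1), ?_, ?_, ?_⟩
    · intro i j hij
      simp only [Prod.mk.injEq] at hij
      rcases Nat.lt_trichotomy i.1 j.1 with h | h | h
      · have := hXsmono (i.1+1) (j.1+1) (by omega) (by have := j.2; omega)
        omega
      · exact Fin.ext h
      · have := hXsmono (j.1+1) (i.1+1) (by omega) (by have := i.2; omega)
        omega
    · ext p
      simp only [Set.mem_range, outerCorners, Set.mem_setOf_eq]
      constructor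
      · rintro ⟨k, rfl⟩
        have hk1 : k.1 + 1 ≤ s - 1 := by have := k.2; omega
        have hX1 : 1 ≤ X (k.1+1) := by
          have := hXsmono 0 (k.1+1) (by omega) hk1
          rw [hX0] at this; omega
        have hY1 : 1 ≤ Y k.1 := by
          have := hYsanti k.1 (s-1) (by have := k.2; omega) (le_refl _)
          rw [hYlast] at this; omega
        refine ⟨hX1, hY1, ?_, ?_, ?_⟩
        · rw [memT]; push_neg
          refine ⟨k.1, by omega, ?_, le_refl _⟩
          have := hXstep k.1 (by have := k.2; omega)
          simp only; omega
        · rw [memT]; push_neg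
          refine ⟨k.1+1, by omega, le_refl _, ?_⟩
          have := hYstep k.1 (by have := k.2; omega)
          simp only; omega
        · rw [memT]
          intro i hi
          rcases Nat.lt_or_ge i (k.1+1) with h' | h'
          · right
            have := hYanti i k.1 (by omega) (by have := k.2; omega)
            simp only; omega
          · left
            have := hXmono (k.1+1) i h' (by omega)
            simp only; omega
      · rintro ⟨hp1, hp2, hA, hB, hC⟩
        rw [memT] at hA hB hC
        push_neg at hA hB
        obtain ⟨i, his, hXi, hYi⟩ := hA
        obtain ⟨j, hjs, hXj, hYj⟩ := hB
        have hYi' : Y i = p.2 := by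
          rcases hC i his with h | h
          · simp only at h; omega
          · simp only at h; omega
        have hXj' : X j = p.1 := by
          rcases hC j hjs with h | h
          · simp only at h; omega
          · simp only at h; omega
        have hij : i < j := by
          by_contra hc
          push_neg at hc
          have := hXmono j i hc (by omega)
          omega
        have hji : j = i + 1 := by
          by_contra hc
          have hlt : i + 1 < j := by omega
          rcases hC (i+1) (by omega) with h | h
          · have := hXsmono (i+1) j hlt (by omega)
            simp only at h; omega
          · have := hYsanti i (i+1) (by omega) (by omega)
            simp only at h; omega
        refine ⟨⟨i, by omega⟩, ?_⟩
        simp only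
        rw [hji] at hXj'
        rw [Prod.ext_iff]
        exact ⟨hXj', hYi'⟩
    · intro i
      have hi1 : i.1 + 1 ≤ s - 1 := by have := i.2; omega
      have e1 := hXY i.1 (by omega)
      have e2 : X (i.1+1) = X i.1 + (β i.1 - α i.1) := by
        have ha1 := hAB i.1 (by omega)
        have := h1 i.1 (by have := i.2; omega)
        simp only [hX]
        rw [hSAstep, hSBstep]
        omega
      have := h1 i.1 (by have := i.2; omega)
      simp only
      omega

lemma YD_forward (T : Set (ℕ × ℕ)) (hT : IsYoung2 T) :
    ∃ (m : ℕ) (F : Fin m → ℕ × ℕ) (G : Fin (m-1) → ℕ × ℕ) (C D : ℕ → ℕ),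
      1 ≤ m ∧ Function.Injective F ∧ Set.range F = innerCorners T ∧
      Function.Injective G ∧ Set.range G = outerCorners T ∧
      (∀ i : Fin m, (F i).1 + (F i).2 = C i.1) ∧
      (∀ i : Fin (m-1), (G i).1 + (G i).2 = D i.1) ∧
      (∀ k, k + 1 < m → C k < D k) ∧ (∀ k, k + 1 < m → C (k+1) < D k) ∧
      ∑ k ∈ range m, C k = ∑ k ∈ range (m-1), D k := by
  classical
  obtain ⟨hfin, hdc⟩ := hT
  -- the profile function
  have hex : ∀ x : ℕ, ∃ y, (x, y) ∉ T := by
    intro x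
    by_contra hc
    push_neg at hc
    exact (Set.infinite_of_injective_forall_mem
      (f := fun y : ℕ => (x, y))
      (fun y z hyz => by simpa using hyz) hc) hfin
  set h : ℕ → ℕ := fun x => Nat.find (hex x) with hh
  have hspec : ∀ x, (x, h x) ∉ T := by
    intro x
    simp only [hh]
    exact Nat.find_spec (hex x)
  have hmin : ∀ x y, y < h x → (x, y) ∈ T := by
    intro x y hy
    simp only [hh] at hy
    have := Nat.find_min (hex x) hy
    simpa using this
  have memh : ∀ x y : ℕ, (x, y) ∈ T ↔ y < h x := by
    intro x y
    constructor
    · intro hxy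
      by_contra hc
      push_neg at hc
      exact hspec x (hdc _ hxy (x, h x) (le_refl _) hc)
    · exact hmin x y
  have hstep : ∀ x, h (x+1) ≤ h x := by
    intro x
    by_contra hc
    push_neg at hc
    have : (x+1, h x) ∈ T := (memh _ _).2 hc
    have : (x, h x) ∈ T := hdc _ this (x, h x) (by omega) (le_refl _)
    rw [memh] at this
    omega
  have hanti : ∀ x y, x ≤ y → h y ≤ h x :=
    fun x y hxy => antitone_nat_of_succ_le hstep hxy
  -- h eventually zero
  have hN : ∃ N, ∀ x, N ≤ x → h x = 0 := by
    have hSfin : Set.Finite {x : ℕ | h x ≠ 0} := by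
      apply Set.Finite.subset (hfin.image Prod.fst)
      intro x hx
      simp only [Set.mem_setOf_eq] at hx
      exact ⟨(x, 0), (memh x 0).2 (by omega), rfl⟩
    obtain ⟨N, hN⟩ := hSfin.bddAbove
    refine ⟨N + 1, fun x hx => ?_⟩
    by_contra hc
    have := hN (Set.mem_setOf_eq ▸ hc : x ∈ {x : ℕ | h x ≠ 0})
    omega
  obtain ⟨N, hN⟩ := hN
  -- corner characterizations
  have innerchar : ∀ p : ℕ × ℕ,
      p ∈ innerCorners T ↔ (p.2 = h p.1 ∧ (p.1 = 0 ∨ h p.1 < h (p.1 - 1))) := by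
    intro p
    simp only [innerCorners, Set.mem_setOf_eq, memh]
    constructor
    · rintro ⟨h1, h2, h3⟩
      push_neg at h1
      constructor
      · rcases h3 with h3 | h3
        · omega
        · omega
      · rcases h2 with h2 | h2
        · left; exact h2
        · right; omega
    · rintro ⟨h1, h2⟩
      refine ⟨by omega, ?_, by omega⟩
      rcases h2 with h2 | h2
      · left; exact h2
      · right; omega
  have outerchar : ∀ p : ℕ × ℕ,
      p ∈ outerCorners T ↔ (1 ≤ p.1 ∧ p.2 = h (p.1 - 1) ∧ h p.1 < h (p.1 - 1)) := by
    intro p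
    simp only [outerCorners, Set.mem_setOf_eq, memh]
    constructor
    · rintro ⟨h1, h2, h3, h4, h5⟩
      push_neg at h3 h4
      exact ⟨h1, by omega, by omega⟩
    · rintro ⟨h1, h2, h3⟩
      have : h p.1 < h (p.1 - 1) := h3
      refine ⟨h1, by omega, by omega, by omega, by omega⟩
  -- the drop set
  set Dset : Finset ℕ := (range (N+1)).filter (fun x => 1 ≤ x ∧ h x < h (x-1)) with hDset
  have hDall : ∀ x : ℕ, x ∈ Dset ↔ (1 ≤ x ∧ h x < h (x-1)) := by
    intro x
    simp only [hDset, mem_filter, mem_range]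
    constructor
    · rintro ⟨_, h2⟩; exact h2
    · rintro ⟨h1, h2⟩
      refine ⟨?_, h1, h2⟩
      by_contra hc
      push_neg at hc
      have e1 : h x = 0 := hN x (by omega)
      have e2 : h (x-1) = 0 := hN (x-1) (by omega)
      omega
  set I : Finset ℕ := insert 0 Dset with hI
  set m : ℕ := I.card with hm
  have hm1 : 1 ≤ m := Finset.card_pos.2 ⟨0, mem_insert_self _ _⟩
  set pe := I.orderIsoOfFin (rfl : I.card = m) with hpe
  set P : ℕ → ℕ := fun k => if hk : k < m then (pe ⟨k, hk⟩ : ℕ) else 0 with hP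
  have Pmono : ∀ i j, i < j → j < m → P i < P j := by
    intro i j hij hj
    simp only [hP]
    rw [dif_pos (by omega : i < m), dif_pos hj]
    exact pe.strictMono (by exact Fin.mk_lt_mk.2 hij)
  have Pmem : ∀ k, k < m → P k ∈ I := by
    intro k hk
    simp only [hP]
    rw [dif_pos hk]
    exact (pe ⟨k, hk⟩).2
  have Psurj : ∀ x, x ∈ I → ∃ k, k < m ∧ P k = x := by
    intro x hx
    refine ⟨(pe.symm ⟨x, hx⟩ : Fin m).1, (pe.symm ⟨x, hx⟩ : Fin m).2, ?_⟩
    simp only [hP]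
    rw [dif_pos (pe.symm ⟨x, hx⟩ : Fin m).2]
    show (pe (pe.symm ⟨x, hx⟩) : ℕ) = x
    rw [pe.apply_symm_apply]
  have P0 : P 0 = 0 := by
    obtain ⟨k, hk, hPk⟩ := Psurj 0 (mem_insert_self _ _)
    rcases Nat.eq_zero_or_pos k with rfl | hpos
    · exact hPk
    · have := Pmono 0 k hpos hk
      omega
  have Pmono' : ∀ i j, i ≤ j → j < m → P i ≤ P j := by
    intro i j hij hj
    rcases Nat.lt_or_ge i j with h' | h'
    · exact le_of_lt (Pmono i j h' hj)
    · have : i = j := by omega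
      rw [this]
  -- no drops strictly between consecutive P values / above the last
  have nodrop : ∀ x, 1 ≤ x → x ∉ I → h x = h (x - 1) := by
    intro x hx hxI
    have : x ∉ Dset := fun hc => hxI (by rw [hI]; exact mem_insert_of_mem hc)
    rw [hDall] at this
    push_neg at this
    have := this hx
    have := hanti (x-1) x (by omega)
    omega
  have gapcon : ∀ k, k < m → ∀ x, P k ≤ x → (∀ j, j < m → P j ≤ x → j ≤ k) →
      h x = h (P k) := by
    intro k hk x
    induction x with
    | zero =>
      intro h1 _
      have : P k = 0 := by omega
      rw [this]
    | succ x ih =>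
      intro h1 h2
      rcases Nat.lt_or_ge x (P k) with h' | h'
      · have : P k = x + 1 := by omega
        rw [this]
      · have hni : x + 1 ∉ I := by
          intro hc
          obtain ⟨j, hj, hPj⟩ := Psurj _ hc
          have := h2 j hj (by omega)
          have := Pmono' j k this hk
          omega
        rw [nodrop (x+1) (by omega) hni]
        simp only [Nat.add_sub_cancel]
        exact ih h' (fun j hj hPj => h2 j hj (by omega))
  have gap : ∀ k, k + 1 < m → ∀ x, P k ≤ x → x < P (k+1) → h x = h (P k) := by
    intro k hk x h1 h2
    apply gapcon k (by omega) x h1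
    intro j hj hPj
    by_contra hc
    push_neg at hc
    have := Pmono' (k+1) j hc (by omega)
    omega
  have hlast : h (P (m-1)) = 0 := by
    have : ∀ x, P (m-1) ≤ x → h x = h (P (m-1)) := by
      intro x hx
      apply gapcon (m-1) (by omega) x hx
      intro j hj _
      omega
    have e := this (max N (P (m-1))) (le_max_right _ _)
    rw [hN _ (le_max_left _ _)] at e
    omega
  -- the enumerations
  refine ⟨m, fun k => (P k.1, h (P k.1)), fun k => (P (k.1+1), h (P k.1)),
    fun k => P k + h (P k), fun k => P (k+1) + h (P k),
    hm1, ?_, ?_, ?_, ?_, fun i => rfl, fun i => rfl, ?_, ?_, ?_⟩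
  · intro i j hij
    simp only [Prod.mk.injEq] at hij
    rcases Nat.lt_trichotomy i.1 j.1 with h' | h' | h'
    · have := Pmono i.1 j.1 h' j.2; omega
    · exact Fin.ext h'
    · have := Pmono j.1 i.1 h' i.2; omega
  · ext q
    simp only [Set.mem_range, innerchar]
    constructor
    · rintro ⟨k, rfl⟩
      refine ⟨rfl, ?_⟩
      have := Pmem k.1 k.2
      rw [hI, mem_insert] at this
      rcases this with h' | h'
      · left; exact h'
      · right; exact ((hDall _).1 h').2
    · rintro ⟨h1, h2⟩
      have : q.1 ∈ I := by
        rw [hI, mem_insert]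
        rcases h2 with h' | h'
        · left; exact h'
        · right
          rw [hDall]
          constructor
          · by_contra hc
            push_neg at hc
            interval_cases q.1
            · simp at h'
          · exact h'
      obtain ⟨k, hk, hPk⟩ := Psurj _ this
      refine ⟨⟨k, hk⟩, ?_⟩
      rw [Prod.ext_iff]
      exact ⟨hPk, by rw [show (P k, h (P k)).2 = h (P k) from rfl, hPk]; exact h1.symm⟩
  · intro i j hij
    simp only [Prod.mk.injEq] at hij
    rcases Nat.lt_trichotomy i.1 j.1 with h' | h' | h'
    · have := Pmono (i.1+1) (j.1+1) (by omega) (by have := j.2; omega); omega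
    · exact Fin.ext h'
    · have := Pmono (j.1+1) (i.1+1) (by omega) (by have := i.2; omega); omega
  · ext q
    simp only [Set.mem_range, outerchar]
    constructor
    · rintro ⟨k, rfl⟩
      have hk1 : k.1 + 1 < m := by have := k.2; omega
      have hmem := Pmem (k.1+1) hk1
      have hne : P (k.1+1) ≠ 0 := by
        have := Pmono 0 (k.1+1) (by omega) hk1
        omega
      have hdrop : P (k.1+1) ∈ Dset := by
        rw [hI, mem_insert] at hmem
        rcases hmem with h' | h'
        · exact absurd h' hne
        · exact h'
      rw [hDall] at hdrop
      have hg : h (P (k.1+1) - 1) = h (P k.1) := by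
        apply gap k.1 hk1
        · have := Pmono k.1 (k.1+1) (by omega) hk1; omega
        · omega
      refine ⟨hdrop.1, ?_, ?_⟩
      · show h (P k.1) = h (P (k.1+1) - 1)
        omega
      · show h (P (k.1+1)) < h (P (k.1+1) - 1)
        exact hdrop.2
    · rintro ⟨h1, h2, h3⟩
      have hq : q.1 ∈ Dset := (hDall _).2 ⟨h1, h3⟩
      obtain ⟨k, hk, hPk⟩ := Psurj q.1 (by rw [hI]; exact mem_insert_of_mem hq)
      have hkne : k ≠ 0 := by
        intro hc
        rw [hc, P0] at hPk
        omega
      have hg : h (q.1 - 1) = h (P (k-1)) := by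
        apply gap (k-1) (by omega)
        · have h1' := Pmono (k-1) k (by omega) hk
          rw [hPk] at h1'
          omega
        · rw [show k - 1 + 1 = k by omega, hPk]
          omega
      refine ⟨⟨k-1, by omega⟩, ?_⟩
      rw [Prod.ext_iff]
      constructor
      · show P (k-1+1) = q.1
        rw [show k - 1 + 1 = k by omega, hPk]
      · show h (P (k-1)) = q.2
        omega
  · intro k hk
    have := Pmono k (k+1) (by omega) hk
    show P k + h (P k) < P (k+1) + h (P k)
    omega
  · intro k hk
    have hmem := Pmem (k+1) hk
    have hne : P (k+1) ≠ 0 := by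
      have := Pmono 0 (k+1) (by omega) hk
      omega
    have hdrop : P (k+1) ∈ Dset := by
      rw [hI, mem_insert] at hmem
      rcases hmem with h' | h'
      · exact absurd h' hne
      · exact h'
    rw [hDall] at hdrop
    have hg : h (P (k+1) - 1) = h (P k) := by
      apply gap k hk
      · have := Pmono k (k+1) (by omega) hk; omega
      · omega
    show P (k+1) + h (P (k+1)) < P (k+1) + h (P k)
    omega
  · -- sums
    have e1 : ∑ k ∈ range m, (P k + h (P k))
        = ∑ k ∈ range m, P k + ∑ k ∈ range m, h (P k) := sum_add_distrib
    have e2 : ∑ k ∈ range (m-1), (P (k+1) + h (P k))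
        = ∑ k ∈ range (m-1), P (k+1) + ∑ k ∈ range (m-1), h (P k) := sum_add_distrib
    have e3 : ∑ k ∈ range m, P k = ∑ k ∈ range (m-1), P (k+1) := by
      rw [show m = (m-1) + 1 by omega, Finset.sum_range_succ']
      rw [P0]
      simp
    have e4 : ∑ k ∈ range m, h (P k) = ∑ k ∈ range (m-1), h (P k) := by
      rw [show m = (m-1) + 1 by omega, Finset.sum_range_succ]
      rw [show (m-1) + 1 - 1 = m - 1 by omega, hlast]
      simp
    rw [e1, e2, e3, e4]

/-- a pair of decreasing sequences `(a_1 ≥ … ≥ a_s)`,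
`(b_1 ≥ … ≥ b_{s−1})` of non-negative integers arises as the weights of the inner
resp. outer corners of some two-dimensional Young diagram iff `b_i > a_i`,
`b_i > a_{i+1}` for all `i`, and `Σ a_i = Σ b_j`.  (That there is exactly one more
`a` than there are `b`'s is encoded in the index types `Fin s` and `Fin (s-1)`.) -/
theorem young_diagram_corner_weights_characterization (s : ℕ) (hs : 1 ≤ s)
    (a : Fin s → ℕ) (b : Fin (s - 1) → ℕ) (ha : Antitone a) (hb : Antitone b) :
    (∃ T : Set (ℕ × ℕ), IsYoung2 T ∧
      (∃ f : Fin s → ℕ × ℕ, Function.Injective f ∧ Set.range f = innerCorners T ∧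
        ∀ i, (f i).1 + (f i).2 = a i) ∧
      (∃ g : Fin (s - 1) → ℕ × ℕ, Function.Injective g ∧ Set.range g = outerCorners T ∧
        ∀ i, (g i).1 + (g i).2 = b i)) ↔
    ((∀ i : Fin (s - 1), a (Fin.castLE (Nat.sub_le s 1) i) < b i) ∧
     (∀ i : Fin (s - 1), a ⟨i.1 + 1, by have := i.2; omega⟩ < b i) ∧
     ∑ i, a i = ∑ j, b j) := by
  constructor
  · rintro ⟨T, hT, ⟨f, hfinj, hfr, hfw⟩, ⟨g, hginj, hgr, hgw⟩⟩
    obtain ⟨m, F, G, C, D, hm1, hFinj, hFr, hGinj, hGr, hFw, hGw, hd1, hd2, hsumCD⟩ :=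
      YD_forward T hT
    have hrangeF : Set.range f = Set.range F := by rw [hfr, hFr]
    have hrangeG : Set.range g = Set.range G := by rw [hgr, hGr]
    have hms : m = s := by
      have σ0 : Fin s ≃ Fin m :=
        (Equiv.ofInjective f hfinj).trans ((Equiv.setCongr hrangeF).trans
          (Equiv.ofInjective F hFinj).symm)
      simpa using (Fintype.card_congr σ0).symm
    subst hms
    set σ : Fin m ≃ Fin m :=
      (Equiv.ofInjective f hfinj).trans ((Equiv.setCongr hrangeF).trans
        (Equiv.ofInjective F hFinj).symm) with hσdef
    have hσ : ∀ i, f i = F (σ i) := by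
      intro i
      show f i = F ((Equiv.ofInjective F hFinj).symm
        (Equiv.setCongr hrangeF (Equiv.ofInjective f hfinj i)))
      rw [Equiv.apply_ofInjective_symm hFinj]
      rfl
    set τ : Fin (m-1) ≃ Fin (m-1) :=
      (Equiv.ofInjective g hginj).trans ((Equiv.setCongr hrangeG).trans
        (Equiv.ofInjective G hGinj).symm) with hτdef
    have hτ : ∀ i, g i = G (τ i) := by
      intro i
      show g i = G ((Equiv.ofInjective G hGinj).symm
        (Equiv.setCongr hrangeG (Equiv.ofInjective g hginj i)))
      rw [Equiv.apply_ofInjective_symm hGinj]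
      rfl
    have wa : ∀ i, a i = C (σ i).1 := by
      intro i
      rw [← hfw i, hσ i]
      exact hFw (σ i)
    have wb : ∀ i, b i = D (τ i).1 := by
      intro i
      rw [← hgw i, hτ i]
      exact hGw (τ i)
    set A : ℕ → ℕ := fun k => if hk : k < m then a ⟨k, hk⟩ else 0 with hA
    set B : ℕ → ℕ := fun k => if hk : k < m - 1 then b ⟨k, hk⟩ else 0 with hB
    have hAv : ∀ i : Fin m, A i.1 = a i := by
      intro i
      simp only [hA]
      rw [dif_pos i.2]
    have hBv : ∀ i : Fin (m-1), B i.1 = b i := by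
      intro i
      simp only [hB]
      rw [dif_pos i.2]
    have hAanti : ∀ p q, p ≤ q → q < m → A q ≤ A p := by
      intro p q hpq hq
      have := ha (show (⟨p, by omega⟩ : Fin m) ≤ ⟨q, hq⟩ from hpq)
      simp only [hA]
      rw [dif_pos hq, dif_pos (show p < m by omega)]
      exact this
    have hBanti : ∀ p q, p ≤ q → q < m - 1 → B q ≤ B p := by
      intro p q hpq hq
      have := hb (show (⟨p, by omega⟩ : Fin (m-1)) ≤ ⟨q, hq⟩ from hpq)
      simp only [hB]
      rw [dif_pos hq, dif_pos (show p < m - 1 by omega)]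
      exact this
    have hcA : ∀ t, ((range m).filter (fun k => t ≤ A k)).card
        = ((range m).filter (fun k => t ≤ C k)).card := by
      intro t
      rw [YD_count_lift a A hAv t, YD_count_perm a C σ wa t]
    have hcB : ∀ t, ((range (m-1)).filter (fun k => t ≤ B k)).card
        = ((range (m-1)).filter (fun k => t ≤ D k)).card := by
      intro t
      rw [YD_count_lift b B hBv t, YD_count_perm b D τ wb t]
    refine ⟨?_, ?_, ?_⟩
    · intro i
      by_contra hc
      push_neg at hc
      set t := b i with ht
      have hAval : t ≤ A i.1 := by
        rw [hAv ⟨i.1, by have := i.2; omega⟩]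
        exact hc
      have h1 : i.1 + 1 ≤ ((range m).filter (fun k => t ≤ A k)).card :=
        YD_anti_count_ge A hAanti (by have := i.2; omega) hAval
      rw [hcA] at h1
      by_cases hall : ∀ k, k < m → t ≤ C k
      · have hDfull : (range (m-1)).filter (fun j => t + 1 ≤ D j) = range (m-1) := by
          apply filter_true_of_mem
          intro j hj
          rw [mem_range] at hj
          have := hd1 j (by omega)
          have := hall j (by omega)
          omega
        have h2' : i.1 + 1 ≤ ((range (m-1)).filter (fun j => t + 1 ≤ B j)).card := by
          rw [hcB, hDfull, card_range]
          have := i.2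
          omega
        have := YD_anti_count_lt B hBanti i.2 h2'
        rw [hBv i] at this
        omega
      · push_neg at hall
        obtain ⟨gp, hgp, hgpt⟩ := hall
        have hcore := YD_core2 C D hd1 hd2 t hgp (by omega)
        have h2' : i.1 + 1 ≤ ((range (m-1)).filter (fun j => t + 1 ≤ B j)).card := by
          rw [hcB]
          omega
        have := YD_anti_count_lt B hBanti i.2 h2'
        rw [hBv i] at this
        omega
    · intro i
      by_contra hc
      push_neg at hc
      set t := b i with ht
      have hAval : t ≤ A (i.1 + 1) := by
        rw [hAv ⟨i.1 + 1, by have := i.2; omega⟩]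
        exact hc
      have h1 : i.1 + 2 ≤ ((range m).filter (fun k => t ≤ A k)).card :=
        YD_anti_count_ge A hAanti (by have := i.2; omega) hAval
      rw [hcA] at h1
      have hcore := YD_core1 C D hd1 t
      have h2' : i.1 + 1 ≤ ((range (m-1)).filter (fun j => t + 1 ≤ B j)).card := by
        rw [hcB]
        omega
      have := YD_anti_count_lt B hBanti i.2 h2'
      rw [hBv i] at this
      omega
    · rw [YD_sum_perm a C σ wa, YD_sum_perm b D τ wb, hsumCD]
  · rintro ⟨h1, h2, h3⟩
    set A : ℕ → ℕ := fun k => if hk : k < s then a ⟨k, hk⟩ else 0 with hA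
    set B : ℕ → ℕ := fun k => if hk : k < s - 1 then b ⟨k, hk⟩ else 0 with hB
    have hAv : ∀ i : Fin s, A i.1 = a i := by
      intro i
      simp only [hA]
      rw [dif_pos i.2]
    have hBv : ∀ i : Fin (s-1), B i.1 = b i := by
      intro i
      simp only [hB]
      rw [dif_pos i.2]
    obtain ⟨T, hT, ⟨f, hfi, hfr, hfw⟩, ⟨g, hgi, hgr, hgw⟩⟩ :=
      YD_construct s hs A B
        (by
          intro i hi
          have := h1 ⟨i, hi⟩
          rw [← hAv (Fin.castLE (Nat.sub_le s 1) ⟨i, hi⟩), ← hBv ⟨i, hi⟩] at this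
          exact this)
        (by
          intro i hi
          have := h2 ⟨i, hi⟩
          rw [← hAv ⟨i + 1, by omega⟩, ← hBv ⟨i, hi⟩] at this
          exact this)
        (by rw [YD_sum_lift a A hAv, YD_sum_lift b B hBv]; exact h3)
    refine ⟨T, hT, ⟨f, hfi, hfr, ?_⟩, ⟨g, hgi, hgr, ?_⟩⟩
    · intro i
      rw [hfw i, hAv i]
    · intro i
      rw [hgw i, hBv i]
end

section
/- Let λ and μ be partitions with sum λ + μ (partswise). For each d, the Hilbert function identity Σ_{B ∈ T(λ+μ)} binom(n + d − w_B, n) = Σ_{B ∈ T(λ)} binom(n + d − w_B, n) + Σ_{B ∈ T(μ)} binom(n + d − w_B, n) − Σ_{B ∈ D(λ,μ)} binom(n − 1 + d − w_B, n − 1) holds, where T(ν) denotes the two-dimensional Young diagram of ν, D(λ,μ) = {(i,j,l) : i < μ_j, l < λ_j} is the associated three-dimensional diagram, w_B is the weight (coordinate sum) of the box B, and binomial coefficients with negative top minus bottom are zero. (Equivalently: Hilb(union) = Hilb(first) + Hilb(second) − Hilb(intersection) for the corresponding monomial multiple structures.) -/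
/-- `χ(O_{P^n}(d − w)) = binom(n + d − w, n)`, interpreted as `0` when `d − w < −n`. -/
def hilbTerm (n d w : ℕ) : ℕ :=
  if w ≤ n + d then Nat.choose (n + d - w) n else 0

/-- The (finite) two-dimensional Young diagram `T(ν) = {(i,j) : i < ν_j}` of a partition
`ν`, realised as a `Finset`; `N` is a bound beyond which `ν` vanishes. -/
def Tfin (nu : ℕ → ℕ) (N : ℕ) : Finset (ℕ × ℕ) :=
  (Finset.range (nu 0 + 1) ×ˢ Finset.range N).filter fun p => p.1 < nu p.2

/-- The three-dimensional diagram `D(λ,μ) = {(i,j,l) : i < μ_j, l < λ_j}` as a `Finset`. -/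
def Dfin (lam mu : ℕ → ℕ) (N : ℕ) : Finset (ℕ × ℕ × ℕ) :=
  (Finset.range (mu 0 + 1) ×ˢ (Finset.range N ×ˢ Finset.range (lam 0 + 1))).filter
    fun p => p.1 < mu p.2.1 ∧ p.2.2 < lam p.2.1

lemma hilbTerm_step (n d w : ℕ) (hn : 1 ≤ n) :
    hilbTerm n d w = hilbTerm n d (w+1) + hilbTerm (n-1) d w := by
  unfold hilbTerm
  obtain ⟨m, rfl⟩ : ∃ m, n = m + 1 := ⟨n-1, by omega⟩
  rcases le_or_gt (w+1) (m+1+d) with h1 | h1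
  · have h0 : w ≤ m + 1 + d := by omega
    have h2 : w ≤ m + d := by omega
    simp only [Nat.add_sub_cancel, if_pos h0, if_pos h1, if_pos h2]
    rw [show m+1+d-w = (m+d-w)+1 by omega, show m+1+d-(w+1) = m+d-w by omega,
      Nat.choose_succ_succ']
    omega
  · rcases le_or_gt w (m+1+d) with h0 | h0
    · have h2 : ¬ (w ≤ m + d) := by omega
      simp only [Nat.add_sub_cancel, if_pos h0, if_neg (by omega : ¬ (w+1 ≤ m+1+d)), if_neg h2,
        add_zero]
      rw [show m+1+d-w = 0 by omega]
      simp [Nat.choose_eq_zero_of_lt (by omega : 0 < m+1)]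
    · have h2 : ¬ (w ≤ m + d) := by omega
      simp only [Nat.add_sub_cancel, if_neg (by omega : ¬ (w ≤ m+1+d)),
        if_neg (by omega : ¬ (w+1 ≤ m+1+d)), if_neg h2, add_zero]

lemma hilbTerm_tele (n d : ℕ) (hn : 1 ≤ n) (w a : ℕ) :
    hilbTerm n d w = hilbTerm n d (w+a) + ∑ l ∈ Finset.range a, hilbTerm (n-1) d (w+l) := by
  induction a with
  | zero => simp
  | succ a ih =>
    rw [Finset.sum_range_succ, ih, hilbTerm_step n d (w+a) hn,
      show w + (a+1) = w + a + 1 from rfl]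
    omega

lemma col_id (n d : ℕ) (hn : 1 ≤ n) (a b j : ℕ) :
    (∑ i ∈ Finset.range (a+b), hilbTerm n d (i+j)) +
      ∑ i ∈ Finset.range b, ∑ l ∈ Finset.range a, hilbTerm (n-1) d (i+j+l) =
    (∑ i ∈ Finset.range a, hilbTerm n d (i+j)) + ∑ i ∈ Finset.range b, hilbTerm n d (i+j) := by
  rw [Finset.sum_range_add]
  have key : ∀ i ∈ Finset.range b, hilbTerm n d (i+j)
      = hilbTerm n d (a+i+j) + ∑ l ∈ Finset.range a, hilbTerm (n-1) d (i+j+l) := by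
    intro i _
    have h := hilbTerm_tele n d hn (i+j) a
    rwa [show i+j+a = a+i+j by ring] at h
  rw [Finset.sum_congr rfl key, Finset.sum_add_distrib]
  omega

lemma Tfin_sum (nu : ℕ → ℕ) (N : ℕ) (hnu : Antitone nu) (f : ℕ → ℕ → ℕ) :
    ∑ B ∈ Tfin nu N, f B.1 B.2 = ∑ j ∈ Finset.range N, ∑ i ∈ Finset.range (nu j), f i j := by
  unfold Tfin
  rw [Finset.sum_filter, Finset.sum_product, Finset.sum_comm]
  refine Finset.sum_congr rfl fun j _ => ?_
  rw [← Finset.sum_filter]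
  have hle : nu j ≤ nu 0 := hnu (Nat.zero_le j)
  congr 1
  ext x
  simp only [Finset.mem_filter, Finset.mem_range]
  omega

lemma Dfin_sum (lam mu : ℕ → ℕ) (N : ℕ) (hlam : Antitone lam) (hmu : Antitone mu)
    (f : ℕ → ℕ → ℕ → ℕ) :
    ∑ B ∈ Dfin lam mu N, f B.1 B.2.1 B.2.2 =
      ∑ j ∈ Finset.range N, ∑ i ∈ Finset.range (mu j), ∑ l ∈ Finset.range (lam j), f i j l := by
  unfold Dfin
  rw [Finset.sum_filter, Finset.sum_product]
  simp only [Finset.sum_product]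
  rw [Finset.sum_comm]
  refine Finset.sum_congr rfl fun j _ => ?_
  have hle1 : mu j ≤ mu 0 := hmu (Nat.zero_le j)
  have hle2 : lam j ≤ lam 0 := hlam (Nat.zero_le j)
  have inner : ∀ i ∈ Finset.range (mu 0 + 1),
      (∑ l ∈ Finset.range (lam 0 + 1), if i < mu j ∧ l < lam j then f i j l else 0)
      = if i < mu j then ∑ l ∈ Finset.range (lam j), f i j l else 0 := by
    intro i _
    by_cases h : i < mu j
    · simp only [h, true_and, if_pos h]
      rw [← Finset.sum_filter]
      congr 1
      ext x
      simp only [Finset.mem_filter, Finset.mem_range]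
      omega
    · simp [h]
  rw [Finset.sum_congr rfl inner, ← Finset.sum_filter]
  congr 1
  ext x
  simp only [Finset.mem_filter, Finset.mem_range]
  omega

/-- the Hilbert-function identity
`Hilb(T(λ+μ)) = Hilb(T(λ)) + Hilb(T(μ)) − Hilb(D(λ,μ))` in each degree `d`, where each
box `B` of weight `w_B` contributes `binom(n + d − w_B, n)` to a two-dimensional diagram
in `P^{n+2}` and `binom(n − 1 + d − w_B, n − 1)` to the three-dimensional intersection
diagram. -/
theorem hilbert_function_of_sum_of_diagrams (n : ℕ) (hn : 1 ≤ n)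
    (lam mu : ℕ → ℕ) (N : ℕ) (hlam : Antitone lam) (hmu : Antitone mu)
    (hlam0 : ∀ j, N ≤ j → lam j = 0) (hmu0 : ∀ j, N ≤ j → mu j = 0) (d : ℕ) :
    (∑ B ∈ Tfin (fun j => lam j + mu j) N, (hilbTerm n d (B.1 + B.2) : ℤ)) =
      (∑ B ∈ Tfin lam N, (hilbTerm n d (B.1 + B.2) : ℤ)) +
      (∑ B ∈ Tfin mu N, (hilbTerm n d (B.1 + B.2) : ℤ)) -
      (∑ B ∈ Dfin lam mu N, (hilbTerm (n - 1) d (B.1 + B.2.1 + B.2.2) : ℤ)) := by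
  have key : (∑ B ∈ Tfin (fun j => lam j + mu j) N, hilbTerm n d (B.1 + B.2)) +
      (∑ B ∈ Dfin lam mu N, hilbTerm (n - 1) d (B.1 + B.2.1 + B.2.2)) =
      (∑ B ∈ Tfin lam N, hilbTerm n d (B.1 + B.2)) +
      (∑ B ∈ Tfin mu N, hilbTerm n d (B.1 + B.2)) := by
    rw [Tfin_sum _ N (fun x y h => add_le_add (hlam h) (hmu h)) (fun i j => hilbTerm n d (i+j)),
      Tfin_sum lam N hlam (fun i j => hilbTerm n d (i+j)),
      Tfin_sum mu N hmu (fun i j => hilbTerm n d (i+j)),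
      Dfin_sum lam mu N hlam hmu (fun i j l => hilbTerm (n-1) d (i+j+l)),
      ← Finset.sum_add_distrib, ← Finset.sum_add_distrib]
    exact Finset.sum_congr rfl fun j _ => col_id n d hn (lam j) (mu j) j
  have h2 := congrArg (fun x : ℕ => (x : ℤ)) key
  push_cast at h2
  linarith
end
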